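/- Let A = Σ_{k=1}^d σ_k u_k v_kᵀ be a rank-d matrix with SVD and let = A + E with leading-d truncated SVD Û D̂ V̂ᵀ. If σ̂_d > 0 (the d-th singular value of Â), then ‖sin Θ(U, Û)‖₂ ≤ ‖E‖₂ / σ̂_d and ‖sin Θ(V, V̂)‖₂ ≤ ‖E‖₂ / σ̂_d, where U = [u_1,…,u_d] and V = [v_1,…,v_d]. -/

import Mathlib

open Matrix Kronecker
namespace KPF

/-- Column-major vectorization of a matrix, indexed by (column, row). -/
def vec {p q : ℕ} (M : Matrix (Fin p) (Fin q) ℝ) : Fin q × Fin p → ℝ :=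
  fun jc => M jc.2 jc.1

/-- The Pitsianis–Van Loan rearrangement operator: rows of `R M` are the
vectorized `p1 × q1` blocks of `M`. -/
def R {p1 p2 q1 q2 : ℕ} (M : Matrix (Fin p2 × Fin p1) (Fin q2 × Fin q1) ℝ) :
    Matrix (Fin q2 × Fin p2) (Fin q1 × Fin p1) ℝ :=
  fun ji cr => M (ji.2, cr.2) (ji.1, cr.1)

/-- Frobenius norm. -/
noncomputable def frob {m n : Type*} [Fintype m] [Fintype n] (M : Matrix m n ℝ) : ℝ :=
  Real.sqrt (∑ i, ∑ j, (M i j) ^ 2)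

/-- Spectral (ℓ2 operator) norm. -/
noncomputable def spec {m n : Type*} [Fintype m] [Fintype n] [DecidableEq n]
    (A : Matrix m n ℝ) : ℝ :=
  ‖LinearMap.toContinuousLinearMap (Matrix.toEuclideanLin A)‖

/-- Singular values of a matrix, in non-increasing order. -/
noncomputable def sv {m n : ℕ} (A : Matrix (Fin m) (Fin n) ℝ) : Fin n → ℝ :=
  fun k =>
    Real.sqrt ((show (Aᵀ * A).IsHermitian by simpa [Matrix.conjTranspose_eq_transpose_of_trivial] using Matrix.isHermitian_conjTranspose_mul_self A).eigenvalues
      (Tuple.sort (show (Aᵀ * A).IsHermitian by simpa [Matrix.conjTranspose_eq_transpose_of_trivial] using Matrix.isHermitian_conjTranspose_mul_self A).eigenvalues k.rev))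

/-- Smallest singular value of a square matrix. -/
noncomputable def sMin {d : ℕ} (A : Matrix (Fin d) (Fin d) ℝ) : ℝ :=
  sInf (Set.range (sv A))

/-- sin-Θ distance between the column spans of two orthonormal matrices. -/
noncomputable def sinTheta {p d : ℕ} (W1 W2 : Matrix (Fin p) (Fin d) ℝ) : ℝ :=
  Real.sqrt (1 - (sMin (W1ᵀ * W2)) ^ 2)

open scoped Matrix.Norms.L2Operator

lemma spec_eq_l2 {m n : Type*} [Fintype m] [Fintype n] [DecidableEq n] (A : Matrix m n ℝ) :
    spec A = ‖A‖ := rfl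

lemma spec_nonneg {m n : Type*} [Fintype m] [Fintype n] [DecidableEq n] (A : Matrix m n ℝ) :
    0 ≤ spec A := by rw [spec_eq_l2]; exact norm_nonneg _

lemma spec_transpose {m n : Type*} [Fintype m] [Fintype n] [DecidableEq m] [DecidableEq n]
    (A : Matrix m n ℝ) : spec Aᵀ = spec A := by
  rw [spec_eq_l2, spec_eq_l2, ← Matrix.l2_opNorm_conjTranspose A]
  congr 1

lemma dot_self_nonneg {k : ℕ} (v : Fin k → ℝ) : 0 ≤ v ⬝ᵥ v :=
  Finset.sum_nonneg fun i _ => mul_self_nonneg (v i)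

lemma euc_norm_sq {k : ℕ} (y : Fin k → ℝ) :
    ‖(EuclideanSpace.equiv (Fin k) ℝ).symm y‖ ^ 2 = y ⬝ᵥ y := by
  rw [EuclideanSpace.norm_eq, Real.sq_sqrt (by positivity)]
  simp [dotProduct, Real.norm_eq_abs, sq_abs, pow_two]

lemma dot_transfer {a b : ℕ} (M : Matrix (Fin a) (Fin b) ℝ) (x : Fin a → ℝ) (y : Fin b → ℝ) :
    x ⬝ᵥ (M *ᵥ y) = (Mᵀ *ᵥ x) ⬝ᵥ y := by
  rw [Matrix.dotProduct_mulVec, Matrix.mulVec_transpose]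

lemma mulVec_bound {m n : ℕ} (A : Matrix (Fin m) (Fin n) ℝ) (x : Fin n → ℝ) :
    (A *ᵥ x) ⬝ᵥ (A *ᵥ x) ≤ spec A ^ 2 * (x ⬝ᵥ x) := by
  have h := Matrix.l2_opNorm_mulVec A ((EuclideanSpace.equiv (Fin n) ℝ).symm x)
  have h2 : ‖(EuclideanSpace.equiv (Fin m) ℝ).symm (A *ᵥ x)‖ ^ 2
      ≤ (‖A‖ * ‖(EuclideanSpace.equiv (Fin n) ℝ).symm x‖) ^ 2 := by
    exact pow_le_pow_left₀ (norm_nonneg _) h 2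
  rw [euc_norm_sq] at h2
  rw [mul_pow, euc_norm_sq] at h2
  exact le_trans h2 (le_of_eq (by rw [spec_eq_l2]))

lemma dot_mulVec_ortho {p d : ℕ} {M : Matrix (Fin p) (Fin d) ℝ} (hM : Mᵀ * M = 1)
    (v : Fin d → ℝ) : (M *ᵥ v) ⬝ᵥ (M *ᵥ v) = v ⬝ᵥ v := by
  rw [dot_transfer, Matrix.mulVec_mulVec, hM, Matrix.one_mulVec]

lemma proj_decomp {p d : ℕ} {U : Matrix (Fin p) (Fin d) ℝ} (hU : Uᵀ * U = 1) (y : Fin p → ℝ) :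
    (y - U *ᵥ (Uᵀ *ᵥ y)) ⬝ᵥ (y - U *ᵥ (Uᵀ *ᵥ y)) = y ⬝ᵥ y - (Uᵀ *ᵥ y) ⬝ᵥ (Uᵀ *ᵥ y) := by
  set z := Uᵀ *ᵥ y with hzdef
  have hz : (U *ᵥ z) ⬝ᵥ (U *ᵥ z) = z ⬝ᵥ z := dot_mulVec_ortho hU z
  have hyz : y ⬝ᵥ (U *ᵥ z) = z ⬝ᵥ z := by rw [dot_transfer]
  have hzy : (U *ᵥ z) ⬝ᵥ y = z ⬝ᵥ z := by rw [dotProduct_comm]; exact hyz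
  rw [sub_dotProduct, dotProduct_sub, dotProduct_sub, hz, hyz, hzy]
  ring


lemma exists_unit_sMin {d : ℕ} (hd : 0 < d) (W : Matrix (Fin d) (Fin d) ℝ) :
    ∃ v : Fin d → ℝ, v ⬝ᵥ v = 1 ∧ (W *ᵥ v) ⬝ᵥ (W *ᵥ v) = sMin W ^ 2 := by
  haveI : Nonempty (Fin d) := ⟨⟨0, hd⟩⟩
  have hmem : sMin W ∈ Set.range (sv W) :=
    (Set.range_nonempty _).csInf_mem (Set.finite_range _)
  obtain ⟨k, hk⟩ := hmem
  set hH := (show (Wᵀ * W).IsHermitian by simpa [Matrix.conjTranspose_eq_transpose_of_trivial] using Matrix.isHermitian_conjTranspose_mul_self W) with hHdef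
  set i := Tuple.sort hH.eigenvalues k.rev with hidef
  set v : Fin d → ℝ := ⇑(hH.eigenvectorBasis i) with hvdef
  have hev : (Wᵀ * W) *ᵥ v = hH.eigenvalues i • v := hH.mulVec_eigenvectorBasis i
  have hunit : v ⬝ᵥ v = 1 := by
    have h1 : ‖hH.eigenvectorBasis i‖ = 1 := hH.eigenvectorBasis.orthonormal.1 i
    have h2 : ‖(EuclideanSpace.equiv (Fin d) ℝ).symm v‖ ^ 2 = v ⬝ᵥ v := euc_norm_sq v
    have h3 : (EuclideanSpace.equiv (Fin d) ℝ).symm v = hH.eigenvectorBasis i := rfl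
    rw [h3, h1] at h2
    simpa using h2.symm
  have hq : (W *ᵥ v) ⬝ᵥ (W *ᵥ v) = hH.eigenvalues i := by
    rw [dot_transfer, Matrix.mulVec_mulVec, hev, smul_dotProduct, smul_eq_mul, hunit, mul_one]
  have hnn : 0 ≤ hH.eigenvalues i := by rw [← hq]; exact dot_self_nonneg _
  refine ⟨v, hunit, ?_⟩
  rw [hq, ← hk]
  have hsvk : sv W k = Real.sqrt (hH.eigenvalues i) := rfl
  rw [hsvk, Real.sq_sqrt hnn]


lemma key {p q d : ℕ} (hd : 0 < d)
    (σ : Fin d → ℝ) (U : Matrix (Fin p) (Fin d) ℝ) (V : Matrix (Fin q) (Fin d) ℝ)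
    (B E : Matrix (Fin p) (Fin q) ℝ)
    (hU : Uᵀ * U = 1)
    (hB : B = U * Matrix.diagonal σ * Vᵀ)
    (Uh : Matrix (Fin p) (Fin d) ℝ) (Vh : Matrix (Fin q) (Fin d) ℝ) (Dh : Fin d → ℝ)
    (hUh : Uhᵀ * Uh = 1) (hVh : Vhᵀ * Vh = 1)
    (hsvd : (B + E) * Vh = Uh * Matrix.diagonal Dh)
    (c0 : ℝ) (hc0 : 0 < c0) (hge : ∀ k, c0 ≤ Dh k) :
    sinTheta U Uh ≤ spec E / c0 := by
  obtain ⟨v, hv1, hv2⟩ := exists_unit_sMin hd (Uᵀ * Uh)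
  set w : Fin d → ℝ := fun k => v k / Dh k with hwdef
  set s : Fin q → ℝ := Vh *ᵥ w with hsdef
  have hDhne : ∀ k, Dh k ≠ 0 := fun k => ne_of_gt (lt_of_lt_of_le hc0 (hge k))
  have hDw : Matrix.diagonal Dh *ᵥ w = v := by
    ext k
    rw [Matrix.mulVec_diagonal]
    exact mul_div_cancel₀ _ (hDhne k)
  have hy : Uh *ᵥ v = (B + E) *ᵥ s := by
    rw [hsdef, Matrix.mulVec_mulVec, hsvd, ← Matrix.mulVec_mulVec, hDw]
  have hqy : (Uh *ᵥ v) ⬝ᵥ (Uh *ᵥ v) = 1 := by rw [dot_mulVec_ortho hUh, hv1]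
  have hcancel : U *ᵥ (Uᵀ *ᵥ (B *ᵥ s)) = B *ᵥ s := by
    have hUB : U * Uᵀ * (U * Matrix.diagonal σ * Vᵀ) = U * Matrix.diagonal σ * Vᵀ := by
      rw [Matrix.mul_assoc U (Matrix.diagonal σ) Vᵀ, ← Matrix.mul_assoc (U * Uᵀ) U,
        Matrix.mul_assoc U Uᵀ U, hU, Matrix.mul_one]
    rw [Matrix.mulVec_mulVec, Matrix.mulVec_mulVec, hB, hUB]
  have hr : Uh *ᵥ v - U *ᵥ (Uᵀ *ᵥ (Uh *ᵥ v)) = (E *ᵥ s) - U *ᵥ (Uᵀ *ᵥ (E *ᵥ s)) := by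
    rw [hy, Matrix.add_mulVec, Matrix.mulVec_add, Matrix.mulVec_add, hcancel]
    abel
  have hqw : w ⬝ᵥ w ≤ 1 / c0 ^ 2 := by
    have h1 : ∀ k, w k * w k ≤ v k * v k / c0 ^ 2 := by
      intro k
      rw [hwdef]
      have h2 : (v k / Dh k) * (v k / Dh k) = (v k * v k) / (Dh k)^2 := by ring
      rw [h2]
      apply div_le_div_of_nonneg_left (mul_self_nonneg _) (pow_pos hc0 2)
      exact pow_le_pow_left₀ hc0.le (hge k) 2
    calc w ⬝ᵥ w ≤ ∑ k, v k * v k / c0 ^ 2 := Finset.sum_le_sum fun k _ => h1 k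
      _ = (v ⬝ᵥ v) / c0 ^ 2 := by rw [← Finset.sum_div]; rfl
      _ = 1 / c0 ^ 2 := by rw [hv1]
  have hqr : (Uh *ᵥ v - U *ᵥ (Uᵀ *ᵥ (Uh *ᵥ v))) ⬝ᵥ (Uh *ᵥ v - U *ᵥ (Uᵀ *ᵥ (Uh *ᵥ v)))
      ≤ spec E ^ 2 / c0 ^ 2 := by
    rw [hr, proj_decomp hU]
    have h2 : (E *ᵥ s) ⬝ᵥ (E *ᵥ s) ≤ spec E ^ 2 * (s ⬝ᵥ s) := mulVec_bound E s
    have h3 : s ⬝ᵥ s = w ⬝ᵥ w := dot_mulVec_ortho hVh w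
    have h4 : spec E ^ 2 * (s ⬝ᵥ s) ≤ spec E ^ 2 * (1 / c0 ^ 2) := by
      rw [h3]
      exact mul_le_mul_of_nonneg_left hqw (pow_nonneg (spec_nonneg E) 2)
    have h5 : 0 ≤ (Uᵀ *ᵥ (E *ᵥ s)) ⬝ᵥ (Uᵀ *ᵥ (E *ᵥ s)) := dot_self_nonneg _
    have := le_trans h2 h4
    rw [mul_one_div] at this
    linarith
  have hmain : 1 - sMin (Uᵀ * Uh) ^ 2 ≤ (spec E / c0) ^ 2 := by
    have hz : (Uᵀ * Uh) *ᵥ v = Uᵀ *ᵥ (Uh *ᵥ v) := by rw [Matrix.mulVec_mulVec]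
    have hpd := proj_decomp hU (Uh *ᵥ v)
    rw [hpd, hqy] at hqr
    rw [← hv2, hz, div_pow]
    linarith
  rw [sinTheta]
  calc Real.sqrt (1 - sMin (Uᵀ * Uh) ^ 2) ≤ Real.sqrt ((spec E / c0) ^ 2) :=
        Real.sqrt_le_sqrt hmain
    _ = spec E / c0 := Real.sqrt_sq (div_nonneg (spec_nonneg E) hc0.le)


lemma sv_antitone {m n : ℕ} (A : Matrix (Fin m) (Fin n) ℝ) : Antitone (sv A) := by
  intro j k hjk
  apply Real.sqrt_le_sqrt
  exact Tuple.monotone_sort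
    (show (Aᵀ * A).IsHermitian by simpa [Matrix.conjTranspose_eq_transpose_of_trivial] using Matrix.isHermitian_conjTranspose_mul_self A).eigenvalues (Fin.rev_le_rev.mpr hjk)


/-- Wedin's sin-Θ theorem for the leading-d truncated SVD of a perturbed
rank-d matrix. -/
theorem stmt11 {m n d : ℕ} (hd : 0 < d) (hdn : d ≤ n)
    (σ : Fin d → ℝ) (U : Matrix (Fin m) (Fin d) ℝ) (V : Matrix (Fin n) (Fin d) ℝ)
    (A E : Matrix (Fin m) (Fin n) ℝ)
    (hU : Uᵀ * U = 1) (hV : Vᵀ * V = 1) (hσ : ∀ k, 0 < σ k)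
    (hA : A = U * Matrix.diagonal σ * Vᵀ)
    (Uh : Matrix (Fin m) (Fin d) ℝ) (Vh : Matrix (Fin n) (Fin d) ℝ) (Dh : Fin d → ℝ)
    (hUh : Uhᵀ * Uh = 1) (hVh : Vhᵀ * Vh = 1)
    -- the diagonal of D̂ consists of the d largest singular values of Â = A + E
    (hDh : ∀ k : Fin d, Dh k = sv (A + E) (Fin.castLE hdn k))
    -- (Û, V̂, D̂) are singular pairs of Â = A + E
    (hsvd1 : (A + E) * Vh = Uh * Matrix.diagonal Dh)
    (hsvd2 : (A + E)ᵀ * Uh = Vh * Matrix.diagonal Dh)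
    (hpos : 0 < Dh ⟨d - 1, Nat.sub_lt hd one_pos⟩) :
    sinTheta U Uh ≤ spec E / Dh ⟨d - 1, Nat.sub_lt hd one_pos⟩ ∧
    sinTheta V Vh ≤ spec E / Dh ⟨d - 1, Nat.sub_lt hd one_pos⟩ := by
  have hge : ∀ k : Fin d, Dh ⟨d - 1, Nat.sub_lt hd one_pos⟩ ≤ Dh k := by
    intro k
    rw [hDh, hDh]
    apply sv_antitone
    have hk := k.isLt
    simp only [Fin.le_def, Fin.coe_castLE]
    omega
  constructor
  · exact key hd σ U V A E hU hA Uh Vh Dh hUh hVh hsvd1 _ hpos hge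
  · have hAt : Aᵀ = V * Matrix.diagonal σ * Uᵀ := by
      rw [hA, Matrix.transpose_mul, Matrix.transpose_mul, Matrix.transpose_transpose,
        Matrix.diagonal_transpose, Matrix.mul_assoc]
    have hsvdt : (Aᵀ + Eᵀ) * Uh = Vh * Matrix.diagonal Dh := by
      rw [← Matrix.transpose_add]; exact hsvd2
    have h2 := key hd σ V U Aᵀ Eᵀ hV hAt Vh Uh Dh hVh hUh hsvdt _ hpos hge
    rwa [spec_transpose] at h2

end KPF
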